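/- The real Clifford algebras Cl_{p,q} and Cl_{p-4,q+4} are isomorphic as ℝ-algebras whenever p ≥ 4. -/

import Mathlib

/-- The quadratic form on `ℝ^(p+q)` with `p` entries `+1` and `q` entries `-1`,
whose Clifford algebra is the real Clifford algebra `Cl_{p,q}`. -/
noncomputable def Qpq (p q : ℕ) : QuadraticForm ℝ (Fin (p + q) → ℝ) :=
  QuadraticMap.weightedSumSquares ℝ (fun i : Fin (p + q) => if (i : ℕ) < p then (1 : ℝ) else -1)

open CliffordAlgebra

namespace CliffHelper

variable {n : ℕ}

noncomputable def Qw (w : Fin n → ℝ) : QuadraticForm ℝ (Fin n → ℝ) :=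
  QuadraticMap.weightedSumSquares ℝ w

lemma Qw_apply (w : Fin n → ℝ) (x : Fin n → ℝ) : Qw w x = ∑ i, w i * (x i * x i) := by
  simp [Qw, smul_eq_mul]

lemma Qw_single (w : Fin n → ℝ) (i : Fin n) : Qw w (Pi.single i 1) = w i := by
  simp [Qw_apply, Pi.single_apply, mul_ite, ite_and, Finset.sum_ite_eq']

lemma single_isOrtho (w : Fin n → ℝ) {i j : Fin n} (h : i ≠ j) :
    (Qw w).IsOrtho (Pi.single i (1:ℝ)) (Pi.single j 1) := by
  have hz : ∀ k : Fin n, (Pi.single i (1:ℝ) : Fin n → ℝ) k * (Pi.single j (1:ℝ) : Fin n → ℝ) k = 0 := by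
    intro k
    rcases ne_or_eq k i with h' | rfl
    · simp [Pi.single_eq_of_ne h']
    · simp [Pi.single_eq_of_ne h]
  simp only [QuadraticMap.IsOrtho, Qw_apply, Pi.add_apply]
  rw [← Finset.sum_add_distrib]
  refine Finset.sum_congr rfl fun k _ => ?_
  linear_combination (2 * w k) * hz k

noncomputable def gQ (w : Fin n → ℝ) (i : Fin n) : CliffordAlgebra (Qw w) :=
  ι (Qw w) (Pi.single i 1)

lemma g_anti (w : Fin n → ℝ) {i j : Fin n} (h : i ≠ j) :
    gQ w j * gQ w i = -(gQ w i * gQ w j) :=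
  ι_mul_ι_comm_of_isOrtho ((single_isOrtho w h).symm ..)

lemma g_sq (w : Fin n → ℝ) (i : Fin n) :
    gQ w i * gQ w i = algebraMap ℝ _ (w i) := by
  rw [gQ, ι_sq_scalar, Qw_single]

-- primed versions for simp-based monomial sorting
lemma g_anti' (w : Fin n → ℝ) {i j : Fin n} (h : i ≠ j) (z : CliffordAlgebra (Qw w)) :
    gQ w j * (gQ w i * z) = -(gQ w i * (gQ w j * z)) := by
  rw [← mul_assoc, g_anti w h, neg_mul, mul_assoc]

lemma g_sq' (w : Fin n → ℝ) (i : Fin n) (z : CliffordAlgebra (Qw w)) :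
    gQ w i * (gQ w i * z) = w i • z := by
  rw [← mul_assoc, g_sq, Algebra.smul_def]

lemma g_sq_smul (w : Fin n → ℝ) (i : Fin n) :
    gQ w i * gQ w i = w i • 1 := by
  rw [g_sq, Algebra.algebraMap_eq_smul_one]


section sumsq

variable {B : Type*} [Ring B] [Algebra ℝ B]

lemma sum_sq (w : Fin n → ℝ) (v : Fin n → B)
    (hanti : ∀ i j, i ≠ j → v j * v i = -(v i * v j))
    (hsq : ∀ i, v i * v i = algebraMap ℝ B (w i)) (x : Fin n → ℝ) :
    (∑ i, x i • v i) * (∑ j, x j • v j) = algebraMap ℝ B (Qw w x) := by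
  set f : Fin n → Fin n → B := fun i j => (x i * x j) • (v i * v j) with hf
  have hT : (∑ i, x i • v i) * (∑ j, x j • v j) = ∑ i, ∑ j, f i j := by
    rw [Finset.sum_mul_sum]
    refine Finset.sum_congr rfl fun i _ => Finset.sum_congr rfl fun j _ => ?_
    rw [hf]
    dsimp only
    rw [smul_mul_smul_comm]
  set D : B := ∑ i, f i i with hD
  have hDiag : D = algebraMap ℝ B (Qw w x) := by
    rw [hD]
    rw [Qw_apply, map_sum]
    refine Finset.sum_congr rfl fun i _ => ?_
    rw [hf]
    simp only [hsq i, Algebra.smul_def, ← map_mul]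
    ring_nf
  have hpair : ∀ i j, f i j + f j i = (if i = j then ((2:ℝ) • f i i) else 0) := by
    intro i j
    rcases eq_or_ne i j with rfl | hij
    · simp [two_smul]
    · rw [if_neg hij, hf]
      dsimp only
      rw [hanti i j hij, mul_comm (x j) (x i), smul_neg]
      exact add_neg_cancel _
  have hswap : (∑ i, ∑ j, f i j) = ∑ i, ∑ j, f j i := Finset.sum_comm
  have hTT : (∑ i, ∑ j, f i j) + (∑ i, ∑ j, f i j) = D + D := by
    nth_rewrite 2 [hswap]
    rw [hD, ← Finset.sum_add_distrib, ← Finset.sum_add_distrib]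
    refine Finset.sum_congr rfl fun i _ => ?_
    rw [← Finset.sum_add_distrib, Finset.sum_congr rfl (fun j _ => hpair i j)]
    simp [two_smul]
  have h2 : (2:ℝ) • (∑ i, ∑ j, f i j) = (2:ℝ) • D := by
    rw [two_smul, two_smul]
    exact hTT
  have := congrArg (fun z => ((2:ℝ)⁻¹) • z) h2
  simp only [smul_smul] at this
  norm_num at this
  rw [hT, this, hDiag]

end sumsq


section core

variable (u : Fin n → ℝ) {a b c d : Fin n} {t : ℝ}

noncomputable def gO (a b c d : Fin n) : CliffordAlgebra (Qw u) :=
  gQ u a * (gQ u b * (gQ u c * gQ u d))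

lemma omega_comm {i : Fin n} (hia : i ≠ a) (hib : i ≠ b) (hic : i ≠ c) (hid : i ≠ d) :
    gQ u i * gO u a b c d = gO u a b c d * gQ u i := by
  simp only [gO, mul_assoc, g_anti u hia.symm, g_anti' u hia.symm, g_anti u hib.symm,
    g_anti' u hib.symm, g_anti u hic.symm, g_anti' u hic.symm, g_anti u hid.symm,
    g_anti' u hid.symm, mul_neg, neg_mul, neg_neg]

lemma omega_anti (hab : a ≠ b) (hac : a ≠ c) (had : a ≠ d) (hbc : b ≠ c) (hbd : b ≠ d)
    (hcd : c ≠ d) (hua : u a = t) (hub : u b = t) (huc : u c = t) (hud : u d = t)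
    {i : Fin n} (hi : i = a ∨ i = b ∨ i = c ∨ i = d) :
    gQ u i * gO u a b c d = -(gO u a b c d * gQ u i) := by
  rcases hi with rfl | rfl | rfl | rfl <;>
    simp only [gO, mul_assoc, g_anti u hab, g_anti' u hab, g_anti u hac, g_anti' u hac,
      g_anti u had, g_anti' u had, g_anti u hbc, g_anti' u hbc, g_anti u hbd, g_anti' u hbd,
      g_anti u hcd, g_anti' u hcd, g_sq_smul u, g_sq' u, hua, hub, huc, hud,
      mul_smul_comm, smul_mul_assoc, smul_smul, neg_mul, mul_neg, neg_neg, neg_smul, smul_neg,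
      one_smul, mul_one, one_mul]

lemma omega_sq (hab : a ≠ b) (hac : a ≠ c) (had : a ≠ d) (hbc : b ≠ c) (hbd : b ≠ d)
    (hcd : c ≠ d) (hua : u a = t) (hub : u b = t) (huc : u c = t) (hud : u d = t)
    (ht : t * t = 1) :
    gO u a b c d * gO u a b c d = 1 := by
  simp only [gO, mul_assoc, g_anti u hab, g_anti' u hab, g_anti u hac, g_anti' u hac,
    g_anti u had, g_anti' u had, g_anti u hbc, g_anti' u hbc, g_anti u hbd, g_anti' u hbd,
    g_anti u hcd, g_anti' u hcd, g_sq_smul u, g_sq' u, hua, hub, huc, hud, ht,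
    mul_smul_comm, smul_mul_assoc, smul_smul, neg_mul, mul_neg, neg_neg, neg_smul, smul_neg,
    one_smul, mul_one, one_mul]

lemma omega_prod (hab : a ≠ b) (hac : a ≠ c) (had : a ≠ d) (hbc : b ≠ c) (hbd : b ≠ d)
    (hcd : c ≠ d) (hua : u a = t) (hub : u b = t) (huc : u c = t) (hud : u d = t)
    (ht : t * t = 1) :
    (gQ u a * gO u a b c d) * ((gQ u b * gO u a b c d) *
      ((gQ u c * gO u a b c d) * (gQ u d * gO u a b c d))) = gO u a b c d := by
  simp only [gO, mul_assoc, g_anti u hab, g_anti' u hab, g_anti u hac, g_anti' u hac,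
    g_anti u had, g_anti' u had, g_anti u hbc, g_anti' u hbc, g_anti u hbd, g_anti' u hbd,
    g_anti u hcd, g_anti' u hcd, g_sq_smul u, g_sq' u, hua, hub, huc, hud, ht,
    mul_smul_comm, smul_mul_assoc, smul_smul, neg_mul, mul_neg, neg_neg, neg_smul, smul_neg,
    one_smul, mul_one, one_mul]

lemma iota_eq_sum (w : Fin n → ℝ) (x : Fin n → ℝ) :
    ι (Qw w) x = ∑ i, x i • gQ w i := by
  conv_lhs => rw [← Finset.univ_sum_single x]
  rw [map_sum]
  refine Finset.sum_congr rfl fun i _ => ?_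
  rw [show (Pi.single i (x i) : Fin n → ℝ) = x i • (Pi.single i (1:ℝ) : Fin n → ℝ) by
    rw [← Pi.single_smul, smul_eq_mul, mul_one], map_smul, gQ]

end core

section key

lemma key (w u : Fin n → ℝ) (a b c d : Fin n) (t : ℝ)
    (hab : a ≠ b) (hac : a ≠ c) (had : a ≠ d) (hbc : b ≠ c) (hbd : b ≠ d) (hcd : c ≠ d)
    (ht : t * t = 1)
    (hua : u a = t) (hub : u b = t) (huc : u c = t) (hud : u d = t)
    (hwa : w a = -t) (hwb : w b = -t) (hwc : w c = -t) (hwd : w d = -t)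
    (hwu : ∀ i, i ≠ a → i ≠ b → i ≠ c → i ≠ d → w i = u i) :
    ∃ F : CliffordAlgebra (Qw w) →ₐ[ℝ] CliffordAlgebra (Qw u),
      ∀ i, F (gQ w i) =
        if i = a ∨ i = b ∨ i = c ∨ i = d then gQ u i * gO u a b c d else gQ u i := by
  set O : CliffordAlgebra (Qw u) := gO u a b c d with hO
  set v : Fin n → CliffordAlgebra (Qw u) :=
    fun i => if i = a ∨ i = b ∨ i = c ∨ i = d then gQ u i * O else gQ u i with hv
  have hOsq : O * O = 1 := omega_sq u hab hac had hbc hbd hcd hua hub huc hud ht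
  have hOanti : ∀ {i : Fin n}, (i = a ∨ i = b ∨ i = c ∨ i = d) →
      gQ u i * O = -(O * gQ u i) :=
    fun hi => omega_anti u hab hac had hbc hbd hcd hua hub huc hud hi
  have hOanti' : ∀ {i : Fin n}, (i = a ∨ i = b ∨ i = c ∨ i = d) →
      O * gQ u i = -(gQ u i * O) := by
    intro i hi; rw [hOanti hi, neg_neg]
  have hOcomm : ∀ {i : Fin n}, ¬(i = a ∨ i = b ∨ i = c ∨ i = d) →
      gQ u i * O = O * gQ u i := by
    intro i hi
    push_neg at hi
    exact omega_comm u hi.1 hi.2.1 hi.2.2.1 hi.2.2.2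
  have hsq : ∀ i, v i * v i = algebraMap ℝ _ (w i) := by
    intro i
    by_cases hi : i = a ∨ i = b ∨ i = c ∨ i = d
    · have hui : u i = t := by rcases hi with rfl | rfl | rfl | rfl <;> assumption
      have hwi : w i = -t := by rcases hi with rfl | rfl | rfl | rfl <;> assumption
      rw [hv]
      simp only [if_pos hi]
      rw [mul_assoc, ← mul_assoc O (gQ u i) O, hOanti' hi, neg_mul, mul_neg, mul_assoc,
        hOsq, mul_one, g_sq, hui, hwi, map_neg]
    · have hwi : w i = u i := by
        push_neg at hi
        exact hwu i hi.1 hi.2.1 hi.2.2.1 hi.2.2.2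
      rw [hv]
      simp only [if_neg hi]
      rw [g_sq, hwi]
  have hanti : ∀ i j, i ≠ j → v j * v i = -(v i * v j) := by
    intro i j hij
    by_cases hi : i = a ∨ i = b ∨ i = c ∨ i = d <;>
      by_cases hj : j = a ∨ j = b ∨ j = c ∨ j = d <;>
      rw [hv] <;> simp only [if_pos, if_neg, hi, hj, ite_true, ite_false]
    · -- both in S
      rw [mul_assoc, ← mul_assoc O (gQ u i) O, hOanti' hi, neg_mul, mul_neg, mul_assoc, hOsq,
        mul_one, mul_assoc, ← mul_assoc O (gQ u j) O, hOanti' hj, neg_mul, mul_neg, mul_assoc,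
        hOsq, mul_one, neg_neg, g_anti u hij, neg_neg]
    · -- i in S, j not
      rw [mul_assoc, ← hOcomm hj, ← mul_assoc, ← mul_assoc, g_anti u hij, neg_mul]
    · -- j in S, i not
      rw [mul_assoc, ← hOcomm hi, ← mul_assoc, ← mul_assoc, g_anti u hij, neg_mul]
    · exact g_anti u hij
  let m : (Fin n → ℝ) →ₗ[ℝ] CliffordAlgebra (Qw u) :=
    { toFun := fun x => ∑ i, x i • v i
      map_add' := fun x y => by simp [add_smul, Finset.sum_add_distrib]
      map_smul' := fun r x => by simp [Finset.smul_sum, smul_smul] }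
  have hcond : ∀ x, m x * m x = algebraMap ℝ _ (Qw w x) := fun x => sum_sq w v hanti hsq x
  refine ⟨CliffordAlgebra.lift (Qw w) ⟨m, hcond⟩, fun i => ?_⟩
  rw [gQ, lift_ι_apply]
  have hmx : m (Pi.single i 1) = v i := by
    simp only [m, LinearMap.coe_mk, AddHom.coe_mk]
    simp [Pi.single_apply, ite_smul, Finset.sum_ite_eq']
  rw [hmx, hv]


lemma roundtrip (w u : Fin n → ℝ) (a b c d : Fin n) (t : ℝ)
    (hab : a ≠ b) (hac : a ≠ c) (had : a ≠ d) (hbc : b ≠ c) (hbd : b ≠ d) (hcd : c ≠ d)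
    (ht : t * t = 1)
    (hwa : w a = -t) (hwb : w b = -t) (hwc : w c = -t) (hwd : w d = -t)
    (F : CliffordAlgebra (Qw w) →ₐ[ℝ] CliffordAlgebra (Qw u))
    (G : CliffordAlgebra (Qw u) →ₐ[ℝ] CliffordAlgebra (Qw w))
    (hF : ∀ i, F (gQ w i) =
      if i = a ∨ i = b ∨ i = c ∨ i = d then gQ u i * gO u a b c d else gQ u i)
    (hG : ∀ i, G (gQ u i) =
      if i = a ∨ i = b ∨ i = c ∨ i = d then gQ w i * gO w a b c d else gQ w i) :
    G.comp F = AlgHom.id ℝ (CliffordAlgebra (Qw w)) := by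
  have ht' : -t * -t = 1 := by rw [neg_mul_neg]; exact ht
  have hOsq : gO w a b c d * gO w a b c d = 1 :=
    omega_sq w hab hac had hbc hbd hcd hwa hwb hwc hwd ht'
  have hprod : (gQ w a * gO w a b c d) * ((gQ w b * gO w a b c d) *
      ((gQ w c * gO w a b c d) * (gQ w d * gO w a b c d))) = gO w a b c d :=
    omega_prod w hab hac had hbc hbd hcd hwa hwb hwc hwd ht'
  have hGF : ∀ i, G (F (gQ w i)) = gQ w i := by
    intro i
    rw [hF i]
    by_cases hi : i = a ∨ i = b ∨ i = c ∨ i = d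
    · rw [if_pos hi, map_mul, gO, map_mul, map_mul, map_mul]
      rw [hG a, hG b, hG c, hG d, hG i]
      rw [if_pos hi, if_pos (Or.inl rfl), if_pos (Or.inr (Or.inl rfl)),
        if_pos (Or.inr (Or.inr (Or.inl rfl))), if_pos (Or.inr (Or.inr (Or.inr rfl)))]
      rw [hprod, mul_assoc, hOsq, mul_one]
    · rw [if_neg hi, hG i, if_neg hi]
  apply CliffordAlgebra.hom_ext
  apply LinearMap.ext
  intro x
  simp only [LinearMap.comp_apply, AlgHom.toLinearMap_apply, AlgHom.comp_apply,
    AlgHom.id_apply]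
  rw [iota_eq_sum, map_sum, map_sum]
  refine Finset.sum_congr rfl fun i _ => ?_
  rw [map_smul, map_smul, hGF i]

lemma iso_of_flip (w u : Fin n → ℝ) (a b c d : Fin n) (t : ℝ)
    (hab : a ≠ b) (hac : a ≠ c) (had : a ≠ d) (hbc : b ≠ c) (hbd : b ≠ d) (hcd : c ≠ d)
    (ht : t * t = 1)
    (hua : u a = t) (hub : u b = t) (huc : u c = t) (hud : u d = t)
    (hwa : w a = -t) (hwb : w b = -t) (hwc : w c = -t) (hwd : w d = -t)
    (hwu : ∀ i, i ≠ a → i ≠ b → i ≠ c → i ≠ d → w i = u i) :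
    Nonempty (CliffordAlgebra (Qw w) ≃ₐ[ℝ] CliffordAlgebra (Qw u)) := by
  have ht' : -t * -t = 1 := by rw [neg_mul_neg]; exact ht
  obtain ⟨F, hF⟩ := key w u a b c d t hab hac had hbc hbd hcd ht hua hub huc hud
    hwa hwb hwc hwd hwu
  obtain ⟨G, hG⟩ := key u w a b c d (-t) hab hac had hbc hbd hcd ht'
    hwa hwb hwc hwd
    (by rw [hua, neg_neg]) (by rw [hub, neg_neg]) (by rw [huc, neg_neg])
    (by rw [hud, neg_neg])
    (fun i hia hib hic hid => (hwu i hia hib hic hid).symm)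
  have h1 : G.comp F = AlgHom.id ℝ _ :=
    roundtrip w u a b c d t hab hac had hbc hbd hcd ht hwa hwb hwc hwd F G hF hG
  have h2 : F.comp G = AlgHom.id ℝ _ :=
    roundtrip u w a b c d (-t) hab hac had hbc hbd hcd ht'
      (by rw [hua, neg_neg]) (by rw [hub, neg_neg]) (by rw [huc, neg_neg])
      (by rw [hud, neg_neg]) G F hG hF
  exact ⟨AlgEquiv.ofAlgHom F G h2 h1⟩

end key


end CliffHelper

/-- `Cl_{p,q} ≅ Cl_{p-4,q+4}` as `ℝ`-algebras whenever `p ≥ 4`. -/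
theorem clifford_iso_mod4 (p q : ℕ) (hp : 4 ≤ p) :
    Nonempty (CliffordAlgebra (Qpq p q) ≃ₐ[ℝ] CliffordAlgebra (Qpq (p - 4) (q + 4))) := by
  classical
  have h4 : p - 4 + (q + 4) = p + q := by omega
  set w : Fin (p+q) → ℝ := fun i => if (i:ℕ) < p then 1 else -1 with hw
  set u : Fin (p+q) → ℝ := fun i => if (i:ℕ) < p - 4 then 1 else -1 with hu
  -- the isometry between `Qpq (p-4) (q+4)` and `Qw u`
  let eL : (Fin (p - 4 + (q + 4)) → ℝ) ≃ₗ[ℝ] (Fin (p + q) → ℝ) :=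
    LinearEquiv.funCongrLeft ℝ ℝ (finCongr h4).symm
  have hiso : (Qpq (p-4) (q+4)).IsometryEquiv (CliffHelper.Qw u) :=
    { toLinearEquiv := eL
      map_app' := by
        intro m
        show CliffHelper.Qw u (eL m) = _
        rw [CliffHelper.Qw_apply, Qpq, QuadraticMap.weightedSumSquares_apply]
        refine Fintype.sum_equiv (finCongr h4).symm _ _ fun j => ?_
        have h1 : eL m j = m (finCongr h4.symm j) := rfl
        have h2 : u j = if ((finCongr h4.symm j : Fin (p-4+(q+4))) : ℕ) < p - 4 then 1 else -1 := by
          simp [hu]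
        rw [h1, h2, smul_eq_mul]
        rfl
      }
  -- the sign-flipping isomorphism
  let a : Fin (p+q) := ⟨p-4, by omega⟩
  let b : Fin (p+q) := ⟨p-3, by omega⟩
  let c : Fin (p+q) := ⟨p-2, by omega⟩
  let d : Fin (p+q) := ⟨p-1, by omega⟩
  have hval : ∀ i : Fin (p+q), i ≠ a → i ≠ b → i ≠ c → i ≠ d →
      (i:ℕ) ≠ p-4 ∧ (i:ℕ) ≠ p-3 ∧ (i:ℕ) ≠ p-2 ∧ (i:ℕ) ≠ p-1 := by
    intro i hia hib hic hid
    refine ⟨fun h => hia (Fin.ext h), fun h => hib (Fin.ext h), fun h => hic (Fin.ext h),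
      fun h => hid (Fin.ext h)⟩
  have hne : ∀ (x y : ℕ) (hx : x < p+q) (hy : y < p+q), x ≠ y →
      (⟨x,hx⟩ : Fin (p+q)) ≠ ⟨y,hy⟩ := fun _ _ _ _ h => Fin.ne_of_val_ne h
  obtain ⟨E0⟩ := CliffHelper.iso_of_flip w u a b c d (-1)
    (hne _ _ _ _ (by omega)) (hne _ _ _ _ (by omega)) (hne _ _ _ _ (by omega))
    (hne _ _ _ _ (by omega)) (hne _ _ _ _ (by omega)) (hne _ _ _ _ (by omega))
    (by norm_num)
    (by simp [hu, a]) (by simp [hu, b]; omega) (by simp [hu, c]; omega) (by simp [hu, d]; omega)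
    (by simp [hw, a]; omega) (by simp [hw, b]; omega) (by simp [hw, c]; omega)
    (by simp [hw, d]; omega)
    (by
      intro i hia hib hic hid
      obtain ⟨h1, h2, h3, h4'⟩ := hval i hia hib hic hid
      simp only [hw, hu]
      rcases lt_or_ge (i:ℕ) (p-4) with h | h
      · rw [if_pos h, if_pos (by omega)]
      · rw [if_neg (by omega), if_neg (by omega)])
  exact ⟨E0.trans (CliffordAlgebra.equivOfIsometry hiso).symm⟩
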